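/- If f₁, f₂ ∈ k⟨x⟩ are nonconstant and stably associated, then deg f₁ = deg f₂ and there exist nonzero g₁, g₂ ∈ k⟨x⟩ with deg g₁ < deg f₁ and deg g₂ < deg f₂ such that f₁g₁ = g₂f₂. -/

import Mathlib

/-- An element of the free algebra is *constant* if it lies in the image of the
structure map `k → k⟨x⟩`; otherwise it is *nonconstant*. -/
def Nonconstant (k : Type*) [CommSemiring k] (d : ℕ) (f : FreeAlgebra k (Fin d)) : Prop :=
  f ∉ Set.range (algebraMap k (FreeAlgebra k (Fin d)))

/-- The degree of `f ∈ k⟨x⟩`: the maximal length of a word in the support of `f`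
under the canonical isomorphism with the monoid algebra of the free monoid. -/
noncomputable def ncDeg (k : Type*) [CommSemiring k] (d : ℕ) (f : FreeAlgebra k (Fin d)) : ℕ :=
  (FreeAlgebra.equivMonoidAlgebraFreeMonoid f).coeff.support.sup fun w => w.length

/-- `f₁` and `f₂` are stably associated if `diag (f₂, 1) = P₁ ⬝ diag (f₁, 1) ⬝ P₂` for
some invertible `2 × 2` matrices `P₁, P₂` over `k⟨x⟩`. -/
def StablyAssociated (k : Type*) [CommSemiring k] (d : ℕ)
    (f₁ f₂ : FreeAlgebra k (Fin d)) : Prop :=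
  ∃ P₁ P₂ : Matrix (Fin 2) (Fin 2) (FreeAlgebra k (Fin d)),
    IsUnit P₁ ∧ IsUnit P₂ ∧
      Matrix.diagonal ![f₂, 1] = P₁ * Matrix.diagonal ![f₁, 1] * P₂

namespace SAproof

variable {k : Type*} [Field k] {d : ℕ}

local notation "W" => FreeMonoid (Fin d)
local notation "S" => MonoidAlgebra k (FreeMonoid (Fin d))

/-- degree = sup of word lengths in the support -/
noncomputable def deg (f : S) : ℕ := f.coeff.support.sup fun w => w.length

theorem length_le_deg {f : S} {w : W} (h : w ∈ f.coeff.support) : w.length ≤ deg f :=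
  Finset.le_sup h

theorem exists_deg_word {f : S} (hf : f ≠ 0) : ∃ w ∈ f.coeff.support, w.length = deg f := by
  obtain ⟨w, hw, hw2⟩ := Finset.exists_mem_eq_sup f.coeff.support
    (Finsupp.support_nonempty_iff.2 (mt MonoidAlgebra.coeff_eq_zero.1 hf)) (fun w => w.length)
  exact ⟨w, hw, hw2.symm⟩

theorem split_unique {p q a b : W} (hpq : p * q = a * b) (hlen : p.length = a.length) :
    p = a ∧ q = b := by
  have := List.append_inj (congrArg FreeMonoid.toList hpq) hlen
  exact ⟨FreeMonoid.toList.injective this.1, FreeMonoid.toList.injective this.2⟩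

theorem word_split (x : W) (i j : ℕ) (h : x.length = i + j) :
    ∃ a b : W, x = a * b ∧ a.length = i ∧ b.length = j := by
  have hx : (FreeMonoid.toList x).length = i + j := h
  refine ⟨FreeMonoid.ofList (x.toList.take i), FreeMonoid.ofList (x.toList.drop i), ?_, ?_, ?_⟩
  · apply FreeMonoid.toList.injective
    simp [List.take_append_drop]
  · show (x.toList.take i).length = i
    rw [List.length_take]
    exact min_eq_left (by omega)
  · show (x.toList.drop i).length = j
    rw [List.length_drop]
    omega

/-- Key coefficient lemma: if the split is unique, the product coefficient factors. -/
theorem mul_apply_unique (f g : S) (a b : W)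
    (h : ∀ p ∈ f.coeff.support, ∀ q ∈ g.coeff.support, p * q = a * b → p = a ∧ q = b) :
    (f * g).coeff (a * b) = f.coeff a * g.coeff b := by
  classical
  rw [MonoidAlgebra.coeff_mul]
  rw [Finsupp.sum]
  have inner : ∀ p ∈ f.coeff.support,
      (g.coeff.sum fun q gq => if p * q = a * b then f.coeff p * gq else 0) =
        if p = a then f.coeff p * g.coeff b else 0 := by
    intro p hp
    rw [Finsupp.sum]
    by_cases hpa : p = a
    · subst hpa
      rw [if_pos rfl]
      by_cases hb : b ∈ g.coeff.support
      · rw [Finset.sum_eq_single_of_mem b hb]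
        · rw [if_pos rfl]
        · intro q hq hqb
          rw [if_neg]
          intro hcon
          exact hqb (h p hp q hq hcon).2
      · rw [Finsupp.notMem_support_iff.1 hb, mul_zero]
        apply Finset.sum_eq_zero
        intro q hq
        rw [if_neg]
        intro hcon
        exact hb ((h p hp q hq hcon).2 ▸ hq)
    · rw [if_neg hpa]
      apply Finset.sum_eq_zero
      intro q hq
      rw [if_neg]
      intro hcon
      exact hpa (h p hp q hq hcon).1
  rw [Finset.sum_congr rfl inner]
  rw [Finset.sum_ite_eq' f.coeff.support a (fun p => f.coeff p * g.coeff b)]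
  by_cases ha : a ∈ f.coeff.support
  · rw [if_pos ha]
  · rw [if_neg ha, Finsupp.notMem_support_iff.1 ha, zero_mul]

/-- coefficient factorization when supports are length-bounded by the split -/
theorem mul_apply_le (f g : S) (a b : W)
    (hf : ∀ p ∈ f.coeff.support, p.length ≤ a.length)
    (hg : ∀ q ∈ g.coeff.support, q.length ≤ b.length) :
    (f * g).coeff (a * b) = f.coeff a * g.coeff b := by
  apply mul_apply_unique
  intro p hp q hq hpq
  apply split_unique hpq
  have h1 := hf p hp
  have h2 := hg q hq
  have h3 : p.length + q.length = a.length + b.length := by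
    have := congrArg FreeMonoid.length hpq
    simpa using this
  omega

theorem deg_mul_ne_zero {f g : S} (hf : f ≠ 0) (hg : g ≠ 0) :
    f * g ≠ 0 ∧ deg (f * g) = deg f + deg g := by
  classical
  obtain ⟨a, ha, hla⟩ := exists_deg_word hf
  obtain ⟨b, hb, hlb⟩ := exists_deg_word hg
  have key : (f * g).coeff (a * b) = f.coeff a * g.coeff b :=
    mul_apply_le f g a b (fun p hp => hla ▸ length_le_deg hp)
      (fun q hq => hlb ▸ length_le_deg hq)
  have hne : (f * g).coeff (a * b) ≠ 0 := by
    rw [key]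
    exact mul_ne_zero (Finsupp.mem_support_iff.1 ha) (Finsupp.mem_support_iff.1 hb)
  have hmem : a * b ∈ (f * g).coeff.support := Finsupp.mem_support_iff.2 hne
  constructor
  · intro h0
    rw [h0] at hmem
    simp at hmem
  · apply le_antisymm
    · apply Finset.sup_le
      intro x hx
      have := MonoidAlgebra.support_coeff_mul_subset f g hx
      rw [Finset.mem_mul] at this
      obtain ⟨p, hp, q, hq, rfl⟩ := this
      have := length_le_deg hp
      have := length_le_deg hq
      rw [FreeMonoid.length_mul]
      omega
    · have := length_le_deg hmem
      rw [FreeMonoid.length_mul, hla, hlb] at this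
      exact this

theorem mul_ne_zero' {f g : S} (hf : f ≠ 0) (hg : g ≠ 0) : f * g ≠ 0 :=
  (deg_mul_ne_zero hf hg).1

theorem deg_mul {f g : S} (hf : f ≠ 0) (hg : g ≠ 0) : deg (f * g) = deg f + deg g :=
  (deg_mul_ne_zero hf hg).2


-- chunk 2
theorem apply_eq_zero_of_deg_lt {f : S} {x : W} (h : deg f < x.length) : f.coeff x = 0 := by
  by_contra hne
  exact absurd (length_le_deg (Finsupp.mem_support_iff.2 hne)) (by omega)

theorem deg_sub_le (f g : S) : deg (f - g) ≤ max (deg f) (deg g) := by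
  apply Finset.sup_le
  intro w hw
  have hne : f.coeff w - g.coeff w ≠ 0 := by
    have := Finsupp.mem_support_iff.1 hw
    rwa [MonoidAlgebra.coeff_sub, Finsupp.sub_apply] at this
  rcases le_or_gt w.length (deg f) with h | h
  · exact le_max_of_le_left h
  · have : f.coeff w = 0 := apply_eq_zero_of_deg_lt h
    rw [this, zero_sub, neg_ne_zero] at hne
    exact le_max_of_le_right (length_le_deg (Finsupp.mem_support_iff.2 hne))

theorem deg_neg (f : S) : deg (-f) = deg f := by
  unfold deg
  rw [MonoidAlgebra.coeff_neg, Finsupp.support_neg]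

theorem deg_add_le (f g : S) : deg (f + g) ≤ max (deg f) (deg g) := by
  have h := deg_sub_le f (-g)
  rw [sub_neg_eq_add, deg_neg] at h
  exact h

theorem one_apply_one : (1 : S).coeff (1 : W) = 1 := by
  rw [MonoidAlgebra.one_def]
  exact Finsupp.single_eq_same

theorem one_apply_ne {x : W} (h : x ≠ 1) : (1 : S).coeff x = 0 := by
  rw [MonoidAlgebra.one_def]
  exact Finsupp.single_eq_of_ne h

theorem one_ne_zero'' : (1 : S) ≠ 0 := by
  intro h
  have := one_apply_one (k := k) (d := d)
  rw [h] at this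
  simp at this

theorem deg_one : deg (1 : S) = 0 := by
  refine Nat.eq_zero_of_le_zero (Finset.sup_le ?_)
  intro w hw
  have : w = 1 := by
    by_contra hne
    exact (Finsupp.mem_support_iff.1 hw) (one_apply_ne hne)
  simp [this]

theorem const_of_deg_zero {f : S} (hf : f ≠ 0) (h : deg f = 0) :
    ∃ a : k, a ≠ 0 ∧ f = algebraMap k S a := by
  have hsupp : f.coeff.support ⊆ {(1 : W)} := by
    intro w hw
    have := length_le_deg hw
    rw [h, Nat.le_zero, FreeMonoid.length_eq_zero] at this
    simp [this]
  have heq : f.coeff = Finsupp.single 1 (f.coeff 1) := Finsupp.support_subset_singleton.mp hsupp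
  refine ⟨f.coeff 1, ?_, ?_⟩
  · intro h0
    rw [h0] at heq
    simp at heq
    exact hf heq
  · rw [MonoidAlgebra.coe_algebraMap]
    exact MonoidAlgebra.coeff_injective heq

theorem deg_algebraMap (a : k) : deg (algebraMap k S a) = 0 := by
  refine Nat.eq_zero_of_le_zero (Finset.sup_le ?_)
  intro w hw
  rw [MonoidAlgebra.coe_algebraMap] at hw
  have := Finsupp.support_single_subset hw
  simp only [Finset.mem_singleton] at this
  simp [this]

theorem deg_zero_of_mul_eq_one {X f : S} (h : X * f = 1) : f ≠ 0 ∧ deg f = 0 := by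
  have hX : X ≠ 0 := by rintro rfl; rw [zero_mul] at h; exact one_ne_zero'' h.symm
  have hf : f ≠ 0 := by rintro rfl; rw [mul_zero] at h; exact one_ne_zero'' h.symm
  refine ⟨hf, ?_⟩
  have := deg_mul hX hf
  rw [h, deg_one] at this
  omega

/-- The rigidity lemma: if the top parts of `a*b` and `c*dd` agree and
`deg b ≤ deg dd`, then `dd` can be reduced modulo `b` (from the left). -/
theorem rigid {a b c dd : S} (ha : a ≠ 0) (hb : b ≠ 0) (hc : c ≠ 0) (hd : dd ≠ 0)
    (hdeg : deg c + deg dd = deg a + deg b)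
    (hcoef : ∀ x : W, x.length = deg a + deg b → (a * b).coeff x = (c * dd).coeff x)
    (hbd : deg b ≤ deg dd) :
    ∃ E : S, dd - E * b = 0 ∨ deg (dd - E * b) < deg dd := by
  classical
  obtain ⟨p₀, hp₀, hlp₀⟩ := exists_deg_word hc
  obtain ⟨w, hw, hlw⟩ := exists_deg_word hb
  have hcp₀ : c.coeff p₀ ≠ 0 := Finsupp.mem_support_iff.1 hp₀
  set ma := deg a with hma
  set mb := deg b with hmb
  set mc := deg c with hmc
  set md := deg dd with hmd
  -- the key identity
  have dagger : ∀ v w' : W, v.length = md - mb → w'.length = mb →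
      a.coeff (p₀ * v) * b.coeff w' = c.coeff p₀ * dd.coeff (v * w') := by
    intro v w' hv hw'
    have hvw' : (v * w').length = md := by
      rw [FreeMonoid.length_mul]; omega
    have hx : ((p₀ * v) * w').length = ma + mb := by
      rw [FreeMonoid.length_mul, FreeMonoid.length_mul]
      omega
    have e2 : (a * b).coeff ((p₀ * v) * w') = a.coeff (p₀ * v) * b.coeff w' := by
      apply mul_apply_le
      · intro p hp
        have := length_le_deg hp
        rw [FreeMonoid.length_mul]
        omega
      · intro q hq
        have := length_le_deg hq
        omega
    have e1 : (c * dd).coeff (p₀ * (v * w')) = c.coeff p₀ * dd.coeff (v * w') := by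
      apply mul_apply_le
      · intro p hp
        have := length_le_deg hp
        omega
      · intro q hq
        have := length_le_deg hq
        omega
    rw [← e2, ← e1, ← mul_assoc]
    exact hcoef _ hx
  -- construct E
  set φ : W → k := fun v => if v.length = md - mb then (c.coeff p₀)⁻¹ * a.coeff (p₀ * v) else 0 with hφ
  have hφsupp : ∀ v : W, φ v ≠ 0 →
      v ∈ a.coeff.support.image (fun z => FreeMonoid.ofList (z.toList.drop mc)) := by
    intro v hv
    rw [hφ] at hv
    simp only at hv
    by_cases hvl : v.length = md - mb
    · rw [if_pos hvl] at hv
      have hav : a.coeff (p₀ * v) ≠ 0 := by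
        intro h0; rw [h0, mul_zero] at hv; exact hv rfl
      refine Finset.mem_image.2 ⟨p₀ * v, Finsupp.mem_support_iff.2 hav, ?_⟩
      have h1 : (p₀ * v).toList = p₀.toList ++ v.toList := rfl
      have hlen : p₀.toList.length = mc := hlp₀
      rw [h1, ← hlen, List.drop_left]
      rfl
    · rw [if_neg hvl] at hv
      exact absurd rfl hv
  set E : S := MonoidAlgebra.ofCoeff (Finsupp.onFinset _ φ hφsupp) with hE
  have hEapply : ∀ v : W, E.coeff v = φ v := fun v => rfl
  have hEsupp : ∀ v ∈ E.coeff.support, v.length = md - mb := by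
    intro v hvmem
    have := Finsupp.mem_support_iff.1 hvmem
    rw [hEapply, hφ] at this
    by_contra hne
    simp only [if_neg hne] at this
    exact this rfl
  have C1 : ∀ x : W, x.length = md → (E * b).coeff x = dd.coeff x := by
    intro x hx
    obtain ⟨x₁, x₂, rfl, hx₁, hx₂⟩ := word_split x (md - mb) mb (by omega)
    have e3 : (E * b).coeff (x₁ * x₂) = E.coeff x₁ * b.coeff x₂ := by
      apply mul_apply_le
      · intro p hp
        rw [hEsupp p hp, hx₁]
      · intro q hq
        have := length_le_deg hq
        omega
    rw [e3, hEapply, hφ]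
    simp only [if_pos hx₁]
    have hdag := dagger x₁ x₂ hx₁ hx₂
    rw [mul_assoc, hdag, ← mul_assoc, inv_mul_cancel₀ hcp₀, one_mul]
  have C2 : ∀ x : W, md < x.length → (E * b).coeff x = 0 ∧ dd.coeff x = 0 := by
    intro x hx
    constructor
    · by_contra hne
      have hmem := MonoidAlgebra.support_coeff_mul_subset E b (Finsupp.mem_support_iff.2 hne)
      rw [Finset.mem_mul] at hmem
      obtain ⟨p, hp, q, hq, rfl⟩ := hmem
      have h1 := hEsupp p hp
      have h2 := length_le_deg hq
      rw [FreeMonoid.length_mul] at hx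
      omega
    · exact apply_eq_zero_of_deg_lt (by omega)
  have hsup : ∀ x ∈ (dd - E * b).coeff.support, x.length < md := by
    intro x hx
    have hne : dd.coeff x - (E * b).coeff x ≠ 0 := by
      have := Finsupp.mem_support_iff.1 hx
      rwa [MonoidAlgebra.coeff_sub, Finsupp.sub_apply] at this
    by_contra hge
    push_neg at hge
    rcases eq_or_lt_of_le hge with heq | hlt
    · rw [← C1 x heq.symm] at hne
      simp at hne
    · obtain ⟨hz1, hz2⟩ := C2 x hlt
      rw [hz1, hz2] at hne
      simp at hne
  refine ⟨E, ?_⟩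
  by_cases h0 : dd - E * b = 0
  · exact Or.inl h0
  · right
    rcases Nat.eq_zero_or_pos md with hmd0 | hmdpos
    · exfalso
      obtain ⟨x, hx⟩ := Finsupp.support_nonempty_iff.2 (mt MonoidAlgebra.coeff_eq_zero.1 h0)
      have := hsup x hx
      omega
    · exact (Finset.sup_lt_iff hmdpos).2 hsup



theorem deg_zero_of_mul_eq_one_left {X f : S} (h : X * f = 1) : X ≠ 0 ∧ deg X = 0 := by
  have hX : X ≠ 0 := by rintro rfl; rw [zero_mul] at h; exact one_ne_zero'' h.symm
  have hf : f ≠ 0 := by rintro rfl; rw [mul_zero] at h; exact one_ne_zero'' h.symm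
  refine ⟨hX, ?_⟩
  have := deg_mul hX hf
  rw [h, deg_one] at this
  omega

theorem mul_right_cancel' {x y f : S} (hf : f ≠ 0) (h : x * f = y * f) : x = y := by
  by_contra hne
  have hxy : x - y ≠ 0 := sub_ne_zero.2 hne
  have : (x - y) * f = 0 := by rw [sub_mul, h, sub_self]
  exact mul_ne_zero' hxy hf this

/-- The comaximal-relation system extracted from stable association. -/
def Good (f₁ f₂ α u α' u' c c' : S) : Prop :=
  f₁ * α = u * f₂ ∧ f₂ * α' = u' * f₁ ∧ α * α' = 1 + c * f₁ ∧ α' * α = 1 + c' * f₂ ∧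
    u * u' = 1 + f₁ * c ∧ u' * u = 1 + f₂ * c'

theorem good_swap {f₁ f₂ α u α' u' c c' : S} (hf₂ : f₂ ≠ 0)
    (hg : Good f₁ f₂ α u α' u' c c') :
    Good u α f₂ f₁ (-c') (-c) (-u') (-α') := by
  obtain ⟨h1, h2, h3, h4, h5, h6⟩ := hg
  have key : α * c' * f₂ = c * u * f₂ := by
    have e1 : α * (α' * α) = α + α * c' * f₂ := by rw [h4]; noncomm_ring
    have e2 : α * α' * α = α + c * u * f₂ := by
      rw [h3, add_mul, one_mul, mul_assoc, h1, ← mul_assoc]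
    rw [← mul_assoc] at e1
    exact add_left_cancel (e1.symm.trans e2)
  have hac : α * c' = c * u := mul_right_cancel' hf₂ key
  refine ⟨h1.symm, ?_, ?_, ?_, ?_, ?_⟩
  · calc α * -c' = -(α * c') := by noncomm_ring
    _ = -(c * u) := by rw [hac]
    _ = -c * u := by noncomm_ring
  · calc f₂ * -c' = -(f₂ * c') := by noncomm_ring
    _ = 1 + -u' * u := by rw [neg_mul, h6]; abel
  · calc -c' * f₂ = -(c' * f₂) := by noncomm_ring
    _ = 1 + -α' * α := by rw [neg_mul, h4]; abel
  · calc f₁ * -c = -(f₁ * c) := by noncomm_ring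
    _ = 1 + u * -u' := by rw [mul_neg, h5]; abel
  · calc -c * f₁ = -(c * f₁) := by noncomm_ring
    _ = 1 + α * -α' := by rw [mul_neg, h3]; abel

theorem good_move {f₁ f₂ α u α' u' c c' : S} (r : S)
    (hg : Good f₁ f₂ α u α' u' c c') :
    Good f₁ f₂ (α - r * f₂) (u - f₁ * r) α' u' (c - r * u') (c' - α' * r) := by
  obtain ⟨h1, h2, h3, h4, h5, h6⟩ := hg
  refine ⟨?_, h2, ?_, ?_, ?_, ?_⟩
  · calc f₁ * (α - r * f₂) = f₁ * α - (f₁ * r) * f₂ := by noncomm_ring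
    _ = (u - f₁ * r) * f₂ := by rw [h1]; noncomm_ring
  · calc (α - r * f₂) * α' = α * α' - r * (f₂ * α') := by noncomm_ring
    _ = (1 + c * f₁) - r * (u' * f₁) := by rw [h3, h2]
    _ = 1 + (c - r * u') * f₁ := by noncomm_ring
  · calc α' * (α - r * f₂) = α' * α - (α' * r) * f₂ := by noncomm_ring
    _ = (1 + c' * f₂) - (α' * r) * f₂ := by rw [h4]
    _ = 1 + (c' - α' * r) * f₂ := by noncomm_ring
  · calc (u - f₁ * r) * u' = u * u' - f₁ * (r * u') := by noncomm_ring
    _ = (1 + f₁ * c) - f₁ * (r * u') := by rw [h5]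
    _ = 1 + f₁ * (c - r * u') := by noncomm_ring
  · calc u' * (u - f₁ * r) = u' * u - (u' * f₁) * r := by noncomm_ring
    _ = (1 + f₂ * c') - (f₂ * α') * r := by rw [h6, h2]
    _ = 1 + f₂ * (c' - α' * r) := by noncomm_ring

theorem good_move' {f₁ f₂ α u α' u' c c' : S} (r' : S)
    (hg : Good f₁ f₂ α u α' u' c c') :
    Good f₁ f₂ α u (α' - r' * f₁) (u' - f₂ * r') (c - α * r') (c' - r' * u) := by
  obtain ⟨h1, h2, h3, h4, h5, h6⟩ := hg
  refine ⟨h1, ?_, ?_, ?_, ?_, ?_⟩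
  · calc f₂ * (α' - r' * f₁) = f₂ * α' - (f₂ * r') * f₁ := by noncomm_ring
    _ = (u' - f₂ * r') * f₁ := by rw [h2]; noncomm_ring
  · calc α * (α' - r' * f₁) = α * α' - (α * r') * f₁ := by noncomm_ring
    _ = (1 + c * f₁) - (α * r') * f₁ := by rw [h3]
    _ = 1 + (c - α * r') * f₁ := by noncomm_ring
  · calc (α' - r' * f₁) * α = α' * α - r' * (f₁ * α) := by noncomm_ring
    _ = (1 + c' * f₂) - r' * (u * f₂) := by rw [h4, h1]
    _ = 1 + (c' - r' * u) * f₂ := by noncomm_ring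
  · calc u * (u' - f₂ * r') = u * u' - (u * f₂) * r' := by noncomm_ring
    _ = (1 + f₁ * c) - (f₁ * α) * r' := by rw [h5, ← h1]
    _ = 1 + f₁ * (c - α * r') := by noncomm_ring
  · calc (u' - f₂ * r') * u = u' * u - f₂ * (r' * u) := by noncomm_ring
    _ = (1 + f₂ * c') - f₂ * (r' * u) := by rw [h6]
    _ = 1 + f₂ * (c' - r' * u) := by noncomm_ring


-- base cases
theorem case_f1_const {f₁ f₂ α u α' u' c c' : S} (hg : Good f₁ f₂ α u α' u' c c')
    (hf₁ : f₁ ≠ 0) (h0 : deg f₁ = 0) : deg f₂ = 0 := by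
  obtain ⟨h1, h2, h3, h4, h5, h6⟩ := hg
  obtain ⟨a, hane, haeq⟩ := const_of_deg_zero hf₁ h0
  have hXf₂ : (a⁻¹ • (α' * u) - c') * f₂ = 1 := by
    calc (a⁻¹ • (α' * u) - c') * f₂ = a⁻¹ • (α' * (u * f₂)) - c' * f₂ := by
          rw [sub_mul, smul_mul_assoc, mul_assoc]
    _ = a⁻¹ • (α' * (f₁ * α)) - c' * f₂ := by rw [h1]
    _ = a⁻¹ • (a • (α' * α)) - c' * f₂ := by
          rw [haeq, ← mul_assoc, ← Algebra.commutes a α', mul_assoc, ← Algebra.smul_def]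
    _ = (α' * α) - c' * f₂ := by rw [smul_smul, inv_mul_cancel₀ hane, one_smul]
    _ = 1 := by rw [h4]; noncomm_ring
  exact (deg_zero_of_mul_eq_one hXf₂).2

theorem case_f2_const {f₁ f₂ α u α' u' c c' : S} (hg : Good f₁ f₂ α u α' u' c c')
    (hf₂ : f₂ ≠ 0) (h0 : deg f₂ = 0) : deg f₁ = 0 := by
  obtain ⟨h1, h2, h3, h4, h5, h6⟩ := hg
  obtain ⟨a, hane, haeq⟩ := const_of_deg_zero hf₂ h0
  have hXf₁ : (a⁻¹ • (α * u') - c) * f₁ = 1 := by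
    calc (a⁻¹ • (α * u') - c) * f₁ = a⁻¹ • (α * (u' * f₁)) - c * f₁ := by
          rw [sub_mul, smul_mul_assoc, mul_assoc]
    _ = a⁻¹ • (α * (f₂ * α')) - c * f₁ := by rw [h2]
    _ = a⁻¹ • (a • (α * α')) - c * f₁ := by
          rw [haeq, ← mul_assoc, ← Algebra.commutes a α, mul_assoc, ← Algebra.smul_def]
    _ = (α * α') - c * f₁ := by rw [smul_smul, inv_mul_cancel₀ hane, one_smul]
    _ = 1 := by rw [h3]; noncomm_ring
  exact (deg_zero_of_mul_eq_one hXf₁).2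

theorem case_alpha_const {f₁ f₂ α u α' u' c c' : S} (hg : Good f₁ f₂ α u α' u' c c')
    (hf₁ : f₁ ≠ 0) (hf₂ : f₂ ≠ 0) (hα : α ≠ 0) (hu : u ≠ 0) (h0 : deg α = 0) :
    deg f₁ = deg f₂ := by
  have hgood := hg
  obtain ⟨h1, h2, h3, h4, h5, h6⟩ := hg
  obtain ⟨a, hane, haeq⟩ := const_of_deg_zero hα h0
  have F0 : deg f₁ + deg α = deg u + deg f₂ := by
    have e := deg_mul hf₁ hα
    rw [h1, deg_mul hu hf₂] at e
    exact e.symm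
  have hcomm : α * f₂ = f₂ * α := by rw [haeq]; exact Algebra.commutes a f₂
  have key : (α * u' - f₂ * c) * f₁ = f₂ := by
    calc (α * u' - f₂ * c) * f₁ = α * (u' * f₁) - f₂ * (c * f₁) := by noncomm_ring
    _ = α * (f₂ * α') - f₂ * (c * f₁) := by rw [h2]
    _ = (α * f₂) * α' - f₂ * (c * f₁) := by rw [mul_assoc]
    _ = (f₂ * α) * α' - f₂ * (c * f₁) := by rw [hcomm]
    _ = f₂ * (α * α') - f₂ * (c * f₁) := by rw [mul_assoc]
    _ = f₂ * (1 + c * f₁) - f₂ * (c * f₁) := by rw [h3]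
    _ = f₂ := by noncomm_ring
  have hXne : α * u' - f₂ * c ≠ 0 := by
    intro hz
    rw [hz, zero_mul] at key
    exact hf₂ key.symm
  have : deg f₂ = deg (α * u' - f₂ * c) + deg f₁ := by rw [← deg_mul hXne hf₁, key]
  omega

theorem case_u_const {f₁ f₂ α u α' u' c c' : S} (hg : Good f₁ f₂ α u α' u' c c')
    (hf₁ : f₁ ≠ 0) (hf₂ : f₂ ≠ 0) (hα : α ≠ 0) (hu : u ≠ 0) (h0 : deg u = 0) :
    deg f₁ = deg f₂ := by
  obtain ⟨h1, h2, h3, h4, h5, h6⟩ := hg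
  obtain ⟨b, hbne, hbeq⟩ := const_of_deg_zero hu h0
  have F0 : deg f₁ + deg α = deg u + deg f₂ := by
    have e := deg_mul hf₁ hα
    rw [h1, deg_mul hu hf₂] at e
    exact e.symm
  have hcommu : u * u' = u' * u := by
    rw [hbeq]; exact Algebra.commutes b u'
  have hfc : f₁ * c = f₂ * c' := by
    have e : (1 : S) + f₁ * c = 1 + f₂ * c' := by rw [← h5, hcommu, h6]
    exact add_left_cancel e
  have hcommf₂ : f₂ * u = u * f₂ := by
    rw [hbeq]; exact (Algebra.commutes b f₂).symm
  have key : f₂ * (u * α' - c' * f₁) = f₁ := by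
    calc f₂ * (u * α' - c' * f₁) = (f₂ * u) * α' - (f₂ * c') * f₁ := by noncomm_ring
    _ = (u * f₂) * α' - (f₁ * c) * f₁ := by rw [hcommf₂, ← hfc]
    _ = u * (f₂ * α') - (f₁ * c) * f₁ := by rw [mul_assoc]
    _ = u * (u' * f₁) - (f₁ * c) * f₁ := by rw [h2]
    _ = (u * u') * f₁ - (f₁ * c) * f₁ := by rw [← mul_assoc u u' f₁]
    _ = (1 + f₁ * c) * f₁ - (f₁ * c) * f₁ := by rw [h5]
    _ = f₁ := by noncomm_ring
  have hYne : u * α' - c' * f₁ ≠ 0 := by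
    intro hz
    rw [hz, mul_zero] at key
    exact hf₁ key.symm
  have : deg f₁ = deg f₂ + deg (u * α' - c' * f₁) := by rw [← deg_mul hf₂ hYne, key]
  omega


/-- Main induction: a Good system with all four principal entries nonzero forces
equal degrees. -/
theorem main_ind (N : ℕ) : ∀ f₁ f₂ α u α' u' c c' : S,
    Good f₁ f₂ α u α' u' c c' → f₁ ≠ 0 → f₂ ≠ 0 → α ≠ 0 → u ≠ 0 →
    deg f₁ + deg f₂ + deg α + deg u ≤ N → deg f₁ = deg f₂ := by
  induction N with
  | zero =>
    intro f₁ f₂ α u α' u' c c' hg hf₁ hf₂ hα hu hsum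
    omega
  | succ n ih =>
    intro f₁ f₂ α u α' u' c c' hg hf₁ hf₂ hα hu hsum
    obtain ⟨h1, h2, h3, h4, h5, h6⟩ := id hg
    have F0 : deg f₁ + deg α = deg u + deg f₂ := by
      have e := deg_mul hf₁ hα
      rw [h1, deg_mul hu hf₂] at e
      exact e.symm
    by_cases hsα : deg α = 0
    · exact case_alpha_const hg hf₁ hf₂ hα hu hsα
    by_cases hsu : deg u = 0
    · exact case_u_const hg hf₁ hf₂ hα hu hsu
    by_cases hn₁ : deg f₁ = 0
    · rw [hn₁, case_f1_const hg hf₁ hn₁]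
    by_cases hn₂ : deg f₂ = 0
    · rw [hn₂, case_f2_const hg hf₂ hn₂]
    -- all degrees ≥ 1
    have hαred_ne : ∀ r : S, α - r * f₂ ≠ 0 := by
      intro r h0
      have hαeq : α = r * f₂ := by rwa [sub_eq_zero] at h0
      have hone : (α' * r - c') * f₂ = 1 := by
        calc (α' * r - c') * f₂ = α' * (r * f₂) - c' * f₂ := by noncomm_ring
        _ = α' * α - c' * f₂ := by rw [← hαeq]
        _ = 1 := by rw [h4]; noncomm_ring
      exact hn₂ (deg_zero_of_mul_eq_one hone).2
    by_cases hred : ∃ r : S, deg (α - r * f₂) < deg α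
    · obtain ⟨r, hr⟩ := hred
      have hg2 := good_move r hg
      have hα2 : α - r * f₂ ≠ 0 := hαred_ne r
      have hu2 : u - f₁ * r ≠ 0 := by
        intro hz
        have e := hg2.1
        rw [hz, zero_mul] at e
        exact mul_ne_zero' hf₁ hα2 e
      have F0' : deg f₁ + deg (α - r * f₂) = deg (u - f₁ * r) + deg f₂ := by
        have e := deg_mul hf₁ hα2
        rw [hg2.1, deg_mul hu2 hf₂] at e
        exact e.symm
      exact ih f₁ f₂ _ _ α' u' _ _ hg2 hf₁ hf₂ hα2 hu2 (by omega)
    · push_neg at hred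
      have hf₂red_ne : ∀ r : S, f₂ - r * α ≠ 0 := by
        intro r h0
        have hf₂eq : f₂ = r * α := by rwa [sub_eq_zero] at h0
        have hone : (α' - c' * r) * α = 1 := by
          calc (α' - c' * r) * α = α' * α - c' * (r * α) := by noncomm_ring
          _ = (1 + c' * f₂) - c' * f₂ := by rw [h4, ← hf₂eq]
          _ = 1 := by noncomm_ring
        exact hsα (deg_zero_of_mul_eq_one hone).2
      by_cases hred2 : ∃ r : S, deg (f₂ - r * α) < deg f₂
      · obtain ⟨r, hr⟩ := hred2
        have hgs := good_swap hf₂ hg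
        have hg2 := good_move r hgs
        have hα2 : f₂ - r * α ≠ 0 := hf₂red_ne r
        have hu2 : f₁ - u * r ≠ 0 := by
          intro hz
          have e := hg2.1
          rw [hz, zero_mul] at e
          exact mul_ne_zero' hu hα2 e
        have F0'' : deg u + deg (f₂ - r * α) = deg (f₁ - u * r) + deg α := by
          have e := deg_mul hu hα2
          rw [hg2.1, deg_mul hu2 hα] at e
          exact e.symm
        have hconc := ih u α _ _ _ _ _ _ hg2 hu hα hα2 hu2 (by omega)
        omega
      · push_neg at hred2
        exfalso
        -- step c1 : deg α < deg f₂
        have hsn₂ : deg α < deg f₂ := by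
          by_contra hge
          push_neg at hge
          have hcoef : ∀ x : W, x.length = deg u + deg f₂ → (u * f₂).coeff x = (f₁ * α).coeff x := by
            intro x _
            rw [h1]
          obtain ⟨E, hE⟩ := rigid hu hf₂ hf₁ hα F0 hcoef hge
          rcases hE with hE0 | hElt
          · exact hαred_ne E hE0
          · exact absurd hElt (not_lt.2 (hred E))
        -- normalize α'
        have hα'red_ne : ∀ r' : S, α' - r' * f₁ ≠ 0 := by
          intro r' h0
          have hαeq : α' = r' * f₁ := by rwa [sub_eq_zero] at h0
          have hone : (α * r' - c) * f₁ = 1 := by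
            calc (α * r' - c) * f₁ = α * (r' * f₁) - c * f₁ := by noncomm_ring
            _ = α * α' - c * f₁ := by rw [← hαeq]
            _ = 1 := by rw [h3]; noncomm_ring
          exact hn₁ (deg_zero_of_mul_eq_one hone).2
        obtain ⟨r'₀, hmin⟩ : ∃ r'₀ : S, ∀ r' : S,
            deg (α' - r'₀ * f₁) ≤ deg (α' - r' * f₁) := by
          have hT : {m : ℕ | ∃ r' : S, deg (α' - r' * f₁) = m}.Nonempty :=
            ⟨deg (α' - 0 * f₁), 0, rfl⟩
          obtain ⟨r'₀, hr'₀⟩ := Nat.sInf_mem hT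
          exact ⟨r'₀, fun r' => hr'₀ ▸ Nat.sInf_le ⟨r', rfl⟩⟩
        have hgm := good_move' r'₀ hg
        obtain ⟨g1, g2, g3, g4, g5, g6⟩ := hgm
        have hβ'ne : α' - r'₀ * f₁ ≠ 0 := hα'red_ne r'₀
        have hu''ne : u' - f₂ * r'₀ ≠ 0 := by
          intro hz
          rw [hz, zero_mul] at g2
          exact mul_ne_zero' hf₂ hβ'ne g2
        have hβ'min : ∀ r' : S, deg (α' - r'₀ * f₁) ≤ deg ((α' - r'₀ * f₁) - r' * f₁) := by
          intro r'
          have e : (α' - r'₀ * f₁) - r' * f₁ = α' - (r'₀ + r') * f₁ := by noncomm_ring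
          rw [e]
          exact hmin (r'₀ + r')
        -- step c3 : deg β' < deg f₁
        have ht : deg (α' - r'₀ * f₁) < deg f₁ := by
          by_contra hge
          push_neg at hge
          have hdeg2 : deg f₂ + deg (α' - r'₀ * f₁) = deg (u' - f₂ * r'₀) + deg f₁ := by
            have e := deg_mul hf₂ hβ'ne
            rw [g2, deg_mul hu''ne hf₁] at e
            exact e.symm
          have hcoef : ∀ x : W, x.length = deg (u' - f₂ * r'₀) + deg f₁ →
              ((u' - f₂ * r'₀) * f₁).coeff x = (f₂ * (α' - r'₀ * f₁)).coeff x := by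
            intro x _
            rw [g2]
          obtain ⟨E, hE⟩ := rigid hu''ne hf₁ hf₂ hβ'ne hdeg2 hcoef hge
          rcases hE with hE0 | hElt
          · have e : (α' - r'₀ * f₁) - E * f₁ = α' - (r'₀ + E) * f₁ := by noncomm_ring
            rw [e] at hE0
            exact hα'red_ne (r'₀ + E) hE0
          · exact absurd hElt (not_lt.2 (hβ'min E))
        -- step c4 : 1 ≤ deg β'
        have ht1 : 1 ≤ deg (α' - r'₀ * f₁) := by
          by_contra hz
          push_neg at hz
          have h0' : deg (α' - r'₀ * f₁) = 0 := by omega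
          obtain ⟨a, hane, haeq⟩ := const_of_deg_zero hβ'ne h0'
          have hsm : a • α = 1 + (c' - r'₀ * u) * f₂ := by
            rw [Algebra.smul_def, ← haeq]
            exact g4
          have hcalc : α - (a⁻¹ • (c' - r'₀ * u)) * f₂ = a⁻¹ • (1 : S) := by
            calc α - (a⁻¹ • (c' - r'₀ * u)) * f₂
                = a⁻¹ • (a • α - (c' - r'₀ * u) * f₂) := by
                  rw [smul_sub a⁻¹ (a • α) ((c' - r'₀ * u) * f₂), smul_smul,
                    inv_mul_cancel₀ hane, one_smul, smul_mul_assoc]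
            _ = a⁻¹ • (1 : S) := by rw [hsm]; congr 1; abel
          have hdz : deg (α - (a⁻¹ • (c' - r'₀ * u)) * f₂) = 0 := by
            rw [hcalc, ← Algebra.algebraMap_eq_smul_one]
            exact deg_algebraMap _
          have := hred (a⁻¹ • (c' - r'₀ * u))
          omega
        -- step c5
        have hc'ne : c' - r'₀ * u ≠ 0 := by
          intro hz
          rw [hz, zero_mul, add_zero] at g4
          have e := deg_mul hβ'ne hα
          rw [g4, deg_one] at e
          omega
        -- step c6
        have hL : deg ((α' - r'₀ * f₁) * α) = deg (α' - r'₀ * f₁) + deg α :=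
          deg_mul hβ'ne hα
        have hdm : deg ((c' - r'₀ * u) * f₂) = deg (c' - r'₀ * u) + deg f₂ :=
          deg_mul hc'ne hf₂
        have hdeg3 : deg (c' - r'₀ * u) + deg f₂ = deg (α' - r'₀ * f₁) + deg α := by
          have h_le : deg (α' - r'₀ * f₁) + deg α ≤
              max (deg (1 : S)) (deg ((c' - r'₀ * u) * f₂)) := by
            rw [← hL, g4]
            exact deg_add_le 1 _
          rw [deg_one] at h_le
          have hXeq : (c' - r'₀ * u) * f₂ = (α' - r'₀ * f₁) * α - 1 := by
            rw [g4]; noncomm_ring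
          have h_ge : deg ((c' - r'₀ * u) * f₂) ≤
              max (deg ((α' - r'₀ * f₁) * α)) (deg (1 : S)) := by
            rw [hXeq]
            exact deg_sub_le _ _
          rw [hL, deg_one] at h_ge
          omega
        have hcoef3 : ∀ x : W, x.length = deg (α' - r'₀ * f₁) + deg α →
            ((α' - r'₀ * f₁) * α).coeff x = ((c' - r'₀ * u) * f₂).coeff x := by
          intro x hx
          rw [g4]
          have hxne : x ≠ 1 := by
            intro h1x
            rw [h1x] at hx
            have : (1 : W).length = 0 := rfl
            omega
          rw [MonoidAlgebra.coeff_add, Finsupp.add_apply, one_apply_ne hxne, zero_add]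
        obtain ⟨E, hE⟩ := rigid hβ'ne hα hc'ne hf₂ hdeg3 hcoef3 (le_of_lt hsn₂)
        rcases hE with hE0 | hElt
        · exact hf₂red_ne E hE0
        · exact absurd hElt (not_lt.2 (hred2 E))


section
variable {R : Type*} [Ring R]

theorem extract_good (f₁ f₂ : R) (P₁ P₂ : Matrix (Fin 2) (Fin 2) R)
    (hP₁ : IsUnit P₁) (hP₂ : IsUnit P₂)
    (hEq : Matrix.diagonal ![f₂, 1] = P₁ * Matrix.diagonal ![f₁, 1] * P₂) :
    ∃ α u α' u' c c' : R,
      f₁ * α = u * f₂ ∧ f₂ * α' = u' * f₁ ∧ α * α' = 1 + c * f₁ ∧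
        α' * α = 1 + c' * f₂ ∧ u * u' = 1 + f₁ * c ∧ u' * u = 1 + f₂ * c' := by
  obtain ⟨v₁, hv₁⟩ := hP₁
  obtain ⟨v₂, hv₂⟩ := hP₂
  set Q₁ : Matrix (Fin 2) (Fin 2) R := Units.val v₁⁻¹ with hQ₁
  set Q₂ : Matrix (Fin 2) (Fin 2) R := Units.val v₂⁻¹ with hQ₂
  have hQ₁P₁ : Q₁ * P₁ = 1 := by rw [hQ₁, ← hv₁]; exact v₁.inv_mul
  have hP₁Q₁ : P₁ * Q₁ = 1 := by rw [hQ₁, ← hv₁]; exact v₁.mul_inv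
  have hQ₂P₂ : Q₂ * P₂ = 1 := by rw [hQ₂, ← hv₂]; exact v₂.inv_mul
  have hP₂Q₂ : P₂ * Q₂ = 1 := by rw [hQ₂, ← hv₂]; exact v₂.mul_inv
  set A : Matrix (Fin 2) (Fin 2) R := Matrix.diagonal ![f₁, 1] with hA
  set B : Matrix (Fin 2) (Fin 2) R := Matrix.diagonal ![f₂, 1] with hB
  have e₁ : A * P₂ = Q₁ * B := by
    rw [hEq, ← Matrix.mul_assoc, ← Matrix.mul_assoc, hQ₁P₁, Matrix.one_mul]
  have e₂ : B * Q₂ = P₁ * A := by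
    rw [hEq, Matrix.mul_assoc, hP₂Q₂, Matrix.mul_one]
  -- entry equations
  have E1 := fun i j => congrFun (congrFun e₁ i) j
  have E2 := fun i j => congrFun (congrFun e₂ i) j
  have HQP2 := fun i j => congrFun (congrFun hQ₂P₂ i) j
  have HPQ2 := fun i j => congrFun (congrFun hP₂Q₂ i) j
  have HQP1 := fun i j => congrFun (congrFun hQ₁P₁ i) j
  have HPQ1 := fun i j => congrFun (congrFun hP₁Q₁ i) j
  have t1 := E1 0 0
  have t2 := E2 0 0
  have t3 := HPQ2 0 0
  have t4 := E2 1 0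
  have t5 := HQP2 0 0
  have t6 := E1 1 0
  have t7 := HQP1 0 0
  have t8 := E1 0 1
  have t9 := HPQ1 0 0
  have t10 := E2 0 1
  simp [hA, hB, Matrix.mul_apply, Fin.sum_univ_two, Matrix.diagonal, Matrix.one_apply] at t1 t2 t3 t4 t5 t6 t7 t8 t9 t10
  refine ⟨P₂ 0 0, Q₁ 0 0, Q₂ 0 0, P₁ 0 0, -(P₂ 0 1 * P₁ 1 0), -(Q₂ 0 1 * Q₁ 1 0),
    t1, t2, ?_, ?_, ?_, ?_⟩
  · calc P₂ 0 0 * Q₂ 0 0 = 1 - P₂ 0 1 * Q₂ 1 0 := eq_sub_of_add_eq t3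
    _ = 1 - P₂ 0 1 * (P₁ 1 0 * f₁) := by rw [t4]
    _ = 1 + -(P₂ 0 1 * P₁ 1 0) * f₁ := by noncomm_ring
  · calc Q₂ 0 0 * P₂ 0 0 = 1 - Q₂ 0 1 * P₂ 1 0 := eq_sub_of_add_eq t5
    _ = 1 - Q₂ 0 1 * (Q₁ 1 0 * f₂) := by rw [t6]
    _ = 1 + -(Q₂ 0 1 * Q₁ 1 0) * f₂ := by noncomm_ring
  · calc Q₁ 0 0 * P₁ 0 0 = 1 - Q₁ 0 1 * P₁ 1 0 := eq_sub_of_add_eq t7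
    _ = 1 - (f₁ * P₂ 0 1) * P₁ 1 0 := by rw [t8]
    _ = 1 + f₁ * -(P₂ 0 1 * P₁ 1 0) := by noncomm_ring
  · calc P₁ 0 0 * Q₁ 0 0 = 1 - P₁ 0 1 * Q₁ 1 0 := eq_sub_of_add_eq t9
    _ = 1 - (f₂ * Q₂ 0 1) * Q₁ 1 0 := by rw [t10]
    _ = 1 + f₂ * -(Q₂ 0 1 * Q₁ 1 0) := by noncomm_ring

end

end SAproof

open SAproof in
/-- If `f₁, f₂ ∈ k⟨x⟩` are nonconstant and stably associated, then `deg f₁ = deg f₂`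
and there exist nonzero `g₁, g₂` of strictly smaller degree with `f₁ g₁ = g₂ f₂`. -/
theorem stablyAssociated_deg_eq_and_witnesses (k : Type*) [Field k] (d : ℕ) (hd : 0 < d)
    (f₁ f₂ : FreeAlgebra k (Fin d))
    (h₁ : Nonconstant k d f₁) (h₂ : Nonconstant k d f₂)
    (hsa : StablyAssociated k d f₁ f₂) :
    ncDeg k d f₁ = ncDeg k d f₂ ∧
      ∃ g₁ g₂ : FreeAlgebra k (Fin d), g₁ ≠ 0 ∧ g₂ ≠ 0 ∧
        ncDeg k d g₁ < ncDeg k d f₁ ∧ ncDeg k d g₂ < ncDeg k d f₂ ∧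
        f₁ * g₁ = g₂ * f₂ := by
  classical
  set ε := (FreeAlgebra.equivMonoidAlgebraFreeMonoid :
    FreeAlgebra k (Fin d) ≃ₐ[k] MonoidAlgebra k (FreeMonoid (Fin d))) with hε
  have hncDeg : ∀ f : FreeAlgebra k (Fin d), ncDeg k d f = deg (ε f) := fun f => rfl
  -- nonconstant facts
  have hnc : ∀ f : FreeAlgebra k (Fin d), Nonconstant k d f → ε f ≠ 0 ∧ deg (ε f) ≠ 0 := by
    intro f hf
    have hfne : ε f ≠ 0 := by
      intro h0
      apply hf
      refine ⟨0, ?_⟩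
      rw [map_zero]
      apply ε.injective
      rw [h0, map_zero]
    refine ⟨hfne, ?_⟩
    intro h0
    obtain ⟨a, _, haeq⟩ := const_of_deg_zero hfne h0
    apply hf
    refine ⟨a, ?_⟩
    apply ε.injective
    rw [haeq, AlgEquiv.commutes]
  obtain ⟨hF₁ne, hn₁⟩ := hnc f₁ h₁
  obtain ⟨hF₂ne, hn₂⟩ := hnc f₂ h₂
  -- extract the Good system and transfer it to the monoid algebra
  obtain ⟨P₁, P₂, hP₁, hP₂, hEq⟩ := hsa
  obtain ⟨α, u, α', u', c, c', r1, r2, r3, r4, r5, r6⟩ :=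
    extract_good f₁ f₂ P₁ P₂ hP₁ hP₂ hEq
  have G : Good (ε f₁) (ε f₂) (ε α) (ε u) (ε α') (ε u') (ε c) (ε c') := by
    refine ⟨?_, ?_, ?_, ?_, ?_, ?_⟩
    · have := congrArg ε r1; simpa [map_mul] using this
    · have := congrArg ε r2; simpa [map_mul] using this
    · have := congrArg ε r3; simpa [map_mul, map_add, map_one] using this
    · have := congrArg ε r4; simpa [map_mul, map_add, map_one] using this
    · have := congrArg ε r5; simpa [map_mul, map_add, map_one] using this
    · have := congrArg ε r6; simpa [map_mul, map_add, map_one] using this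
  obtain ⟨G1, G2, G3, G4, G5, G6⟩ := id G
  -- nonvanishing of α and u
  have hAne : ε α ≠ 0 := by
    intro h0
    have h0' : (1 : MonoidAlgebra k (FreeMonoid (Fin d))) + ε c' * ε f₂ = 0 := by
      rw [← G4, h0, mul_zero]
    have h1 : (1 : MonoidAlgebra k (FreeMonoid (Fin d))) = -(ε c' * ε f₂) :=
      add_eq_zero_iff_eq_neg.1 h0'
    have h2 : (-(ε c')) * ε f₂ = 1 := by rw [neg_mul, ← h1]
    exact hn₂ (deg_zero_of_mul_eq_one h2).2
  have hUne : ε u ≠ 0 := by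
    intro h0
    have h0' : (1 : MonoidAlgebra k (FreeMonoid (Fin d))) + ε f₁ * ε c = 0 := by
      rw [← G5, h0, zero_mul]
    have h1 : (1 : MonoidAlgebra k (FreeMonoid (Fin d))) = -(ε f₁ * ε c) :=
      add_eq_zero_iff_eq_neg.1 h0'
    have h2 : ε f₁ * (-(ε c)) = 1 := by rw [mul_neg, ← h1]
    exact hn₁ (deg_zero_of_mul_eq_one_left h2).2
  -- equal degrees
  have degeq : deg (ε f₁) = deg (ε f₂) :=
    main_ind (deg (ε f₁) + deg (ε f₂) + deg (ε α) + deg (ε u)) _ _ _ _ _ _ _ _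
      G hF₁ne hF₂ne hAne hUne le_rfl
  -- reduced witness
  have hAredne : ∀ r, ε α - r * ε f₂ ≠ 0 := by
    intro r h0
    have hαeq : ε α = r * ε f₂ := by rwa [sub_eq_zero] at h0
    have hone : (ε α' * r - ε c') * ε f₂ = 1 := by
      calc (ε α' * r - ε c') * ε f₂ = ε α' * (r * ε f₂) - ε c' * ε f₂ := by noncomm_ring
      _ = ε α' * ε α - ε c' * ε f₂ := by rw [← hαeq]
      _ = 1 := by rw [G4]; noncomm_ring
    exact hn₂ (deg_zero_of_mul_eq_one hone).2
  obtain ⟨r₀, hmin⟩ : ∃ r₀, ∀ r, deg (ε α - r₀ * ε f₂) ≤ deg (ε α - r * ε f₂) := by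
    have hT : {m : ℕ | ∃ r, deg (ε α - r * ε f₂) = m}.Nonempty :=
      ⟨deg (ε α - 0 * ε f₂), 0, rfl⟩
    obtain ⟨r₀, hr₀⟩ := Nat.sInf_mem hT
    exact ⟨r₀, fun r => hr₀ ▸ Nat.sInf_le ⟨r, rfl⟩⟩
  have hg₀ := good_move r₀ G
  have hA₀ne : ε α - r₀ * ε f₂ ≠ 0 := hAredne r₀
  have hU₀ne : ε u - ε f₁ * r₀ ≠ 0 := by
    intro hz
    have e := hg₀.1
    rw [hz, zero_mul] at e
    exact mul_ne_zero' hF₁ne hA₀ne e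
  have F0₀ : deg (ε f₁) + deg (ε α - r₀ * ε f₂) = deg (ε u - ε f₁ * r₀) + deg (ε f₂) := by
    have e := deg_mul hF₁ne hA₀ne
    rw [hg₀.1, deg_mul hU₀ne hF₂ne] at e
    exact e.symm
  have hs₀ : deg (ε α - r₀ * ε f₂) < deg (ε f₂) := by
    by_contra hge
    push_neg at hge
    have hcoef : ∀ x : FreeMonoid (Fin d),
        x.length = deg (ε u - ε f₁ * r₀) + deg (ε f₂) →
        ((ε u - ε f₁ * r₀) * ε f₂).coeff x = (ε f₁ * (ε α - r₀ * ε f₂)).coeff x := by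
      intro x _
      rw [hg₀.1]
    obtain ⟨E, hE⟩ := rigid hU₀ne hF₂ne hF₁ne hA₀ne F0₀ hcoef hge
    rcases hE with hE0 | hElt
    · have e : (ε α - r₀ * ε f₂) - E * ε f₂ = ε α - (r₀ + E) * ε f₂ := by noncomm_ring
      rw [e] at hE0
      exact hAredne (r₀ + E) hE0
    · have e : (ε α - r₀ * ε f₂) - E * ε f₂ = ε α - (r₀ + E) * ε f₂ := by noncomm_ring
      rw [e] at hElt
      exact absurd hElt (not_lt.2 (hmin (r₀ + E)))
  refine ⟨by rw [hncDeg, hncDeg, degeq], ε.symm (ε α - r₀ * ε f₂), ε.symm (ε u - ε f₁ * r₀),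
    ?_, ?_, ?_, ?_, ?_⟩
  · intro h0
    apply hA₀ne
    have := congrArg ε h0
    rwa [AlgEquiv.apply_symm_apply, map_zero] at this
  · intro h0
    apply hU₀ne
    have := congrArg ε h0
    rwa [AlgEquiv.apply_symm_apply, map_zero] at this
  · rw [hncDeg, hncDeg, AlgEquiv.apply_symm_apply, degeq]
    exact hs₀
  · rw [hncDeg, hncDeg, AlgEquiv.apply_symm_apply]
    omega
  · apply ε.injective
    rw [map_mul, map_mul, AlgEquiv.apply_symm_apply, AlgEquiv.apply_symm_apply]
    exact hg₀.1
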